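/- Let k ≥ 1, ℓ ∈ ℝ^k, μ_i > 0 and θ_i ≥ 0 for i = 1,…,k, x ∈ ℝ^k, and let w : [0,∞) → ℝ^k be continuous with w(0) = 0. Let X : [0,∞) → ℝ^k be continuous and Ψ : [0,∞) → ℝ^k be locally integrable with Ψ_i(t) ≤ X_i(t) for all i and t, and Σ_i Ψ_i(t) = min(0, Σ_i X_i(t)) for all t, and suppose X_i(t) = x_i + w_i(t) + ∫₀ᵗ [ −θ_i X_i(s) − (μ_i − θ_i) Ψ_i(s) + ℓ_i ] ds for all i and t. Then there is a constant c > 0, depending only on k, μ, θ and ℓ (not on x, w or t), such that ‖X(t)‖ ≤ c [ 1 + t² + ‖x‖ + ‖w(t)‖ + ∫₀ᵗ ‖w(s)‖ ds + ∫₀ᵗ ∫₀ˢ ‖w(r)‖ dr ds ] for all t ≥ 0. -/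

import Mathlib

open Set MeasureTheory Real

noncomputable def l1 {k : ℕ} (x : Fin k → ℝ) : ℝ := ∑ i, |x i|

section helpers


lemma intExp (c a b : ℝ) (hc : c ≠ 0) :
    ∫ s in a..b, Real.exp (c*s) = (Real.exp (c*b) - Real.exp (c*a))/c := by
  have h : ∀ s : ℝ, HasDerivAt (fun u => Real.exp (c*u)/c) (Real.exp (c*s)) s := by
    intro s
    have h1 : HasDerivAt (fun u : ℝ => c*u) c s := by simpa using (hasDerivAt_id s).const_mul c
    have h2 := (Real.hasDerivAt_exp (c*s)).comp s h1
    have h3 := h2.div_const c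
    refine h3.congr_deriv ?_
    field_simp
  rw [intervalIntegral.integral_eq_sub_of_hasDerivAt (fun s _ => h s)
    ((Real.continuous_exp.comp (continuous_const.mul continuous_id)).intervalIntegrable a b)]
  ring

lemma fub (c t : ℝ) (hc : c ≠ 0) (ht : 0 ≤ t) (g : ℝ → ℝ)
    (hg : IntervalIntegrable g volume 0 t) :
    ∫ s in (0:ℝ)..t, Real.exp (c*s) * (∫ r in (0:ℝ)..s, g r)
      = ∫ r in (0:ℝ)..t, ((Real.exp (c*t) - Real.exp (c*r))/c) * g r := by
  set A : Set ℝ := Ioc (0:ℝ) t with hA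
  set ν : Measure ℝ := volume.restrict A with hν
  haveI : IsFiniteMeasure ν := by
    constructor
    rw [hν, Measure.restrict_apply_univ]
    exact measure_Ioc_lt_top
  have hgI : IntegrableOn g A volume := hg.1
  have hgν : Integrable g ν := hgI
  have hgm : AEStronglyMeasurable g ν := hgν.aestronglyMeasurable
  set S : Set (ℝ×ℝ) := {p : ℝ×ℝ | p.2 ≤ p.1} with hS
  have hSm : MeasurableSet S := measurableSet_le measurable_snd measurable_fst
  set F : ℝ×ℝ → ℝ := S.indicator (fun p => Real.exp (c*p.1) * g p.2) with hF
  set K : ℝ := Real.exp (max (c*t) 0) with hK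
  have hFm : AEStronglyMeasurable F (ν.prod ν) := by
    apply AEStronglyMeasurable.indicator _ hSm
    exact ((Real.continuous_exp.comp (continuous_const.mul continuous_fst)).aestronglyMeasurable).mul hgm.comp_snd
  have hprodmem : ∀ᵐ p ∂(ν.prod ν), p ∈ A ×ˢ A := by
    rw [hν, Measure.prod_restrict]
    exact ae_restrict_mem (measurableSet_Ioc.prod measurableSet_Ioc)
  have hFint : Integrable F (ν.prod ν) := by
    apply Integrable.mono' (g := fun p => K * |g p.2|)
    · apply (integrable_prod_iff ((((hgν.abs).aestronglyMeasurable).comp_snd).const_mul K)).2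
      constructor
      · exact Filter.Eventually.of_forall (fun x => (hgν.abs).const_mul K)
      · apply Integrable.congr (integrable_const (∫ y, ‖K * |g y|‖ ∂ν))
        exact Filter.Eventually.of_forall (fun x => rfl)
    · exact hFm
    · filter_upwards [hprodmem] with p hp
      have hp1 : p.1 ∈ A := hp.1
      have hexp : Real.exp (c*p.1) ≤ K := by
        rw [hK]
        apply Real.exp_le_exp.2
        rcases le_or_gt 0 c with h | h
        · exact le_max_of_le_left (mul_le_mul_of_nonneg_left hp1.2 h)
        · exact le_max_of_le_right (mul_nonpos_of_nonpos_of_nonneg h.le hp1.1.le)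
      have : ‖F p‖ ≤ ‖Real.exp (c*p.1) * g p.2‖ := by
        rw [hF]
        by_cases h : p ∈ S
        · rw [Set.indicator_of_mem h]
        · rw [Set.indicator_of_notMem h]; simp; positivity
      refine this.trans ?_
      rw [norm_mul]
      simp only [Real.norm_eq_abs]
      rw [abs_of_pos (Real.exp_pos _)]
      exact mul_le_mul_of_nonneg_right hexp (abs_nonneg _)
  have claim1 : ∀ᵐ s ∂ν, Real.exp (c*s) * (∫ r in (0:ℝ)..s, g r) = ∫ r, F (s, r) ∂ν := by
    rw [hν]
    filter_upwards [ae_restrict_mem measurableSet_Ioc] with s hs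
    have h1 : (fun r => F (s, r)) = (Iic s).indicator (fun r => Real.exp (c*s) * g r) := by
      funext r
      simp [hF, hS, Set.indicator_apply]
    rw [h1, integral_indicator measurableSet_Iic, Measure.restrict_restrict measurableSet_Iic]
    have h2 : Iic s ∩ A = Ioc 0 s := by
      rw [hA]; ext r
      simp only [mem_inter_iff, mem_Iic, mem_Ioc]
      exact ⟨fun ⟨h, h0, _⟩ => ⟨h0, h⟩, fun ⟨h0, hle⟩ => ⟨hle, h0, hle.trans hs.2⟩⟩
    rw [h2, MeasureTheory.integral_const_mul, intervalIntegral.integral_of_le hs.1.le]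
  have claim2 : ∀ᵐ r ∂ν, (∫ s, F (s, r) ∂ν) = ((Real.exp (c*t) - Real.exp (c*r))/c) * g r := by
    rw [hν]
    filter_upwards [ae_restrict_mem measurableSet_Ioc] with r hr
    have h1 : (fun s => F (s, r)) = (Ici r).indicator (fun s => Real.exp (c*s) * g r) := by
      funext s
      simp [hF, hS, Set.indicator_apply]
    rw [h1, integral_indicator measurableSet_Ici, Measure.restrict_restrict measurableSet_Ici]
    have h2 : Ici r ∩ A = Icc r t := by
      rw [hA]; ext s
      simp only [mem_inter_iff, mem_Ici, mem_Ioc, mem_Icc]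
      exact ⟨fun ⟨h, _, h2⟩ => ⟨h, h2⟩, fun ⟨h, h2⟩ => ⟨h, hr.1.trans_le h, h2⟩⟩
    rw [h2, MeasureTheory.integral_mul_const, MeasureTheory.integral_Icc_eq_integral_Ioc,
      ← intervalIntegral.integral_of_le hr.2, intExp c r t hc]
  calc ∫ s in (0:ℝ)..t, Real.exp (c*s) * (∫ r in (0:ℝ)..s, g r)
      = ∫ s, Real.exp (c*s) * (∫ r in (0:ℝ)..s, g r) ∂ν := by
        rw [intervalIntegral.integral_of_le ht, hν]
    _ = ∫ s, (∫ r, F (s, r) ∂ν) ∂ν := integral_congr_ae claim1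
    _ = ∫ r, (∫ s, F (s, r) ∂ν) ∂ν := integral_integral_swap hFint
    _ = ∫ r, ((Real.exp (c*t) - Real.exp (c*r))/c) * g r ∂ν := integral_congr_ae claim2
    _ = ∫ r in (0:ℝ)..t, ((Real.exp (c*t) - Real.exp (c*r))/c) * g r := by
        rw [intervalIntegral.integral_of_le ht, hν]

lemma voc (μ c₀ x ℓ0 : ℝ) (hμ : 0 < μ) (w X Z : ℝ → ℝ)
    (hX : ContinuousOn X (Ici 0)) (hw : ContinuousOn w (Ici 0))
    (hZ : ∀ u : ℝ, 0 ≤ u → IntervalIntegrable Z volume 0 u)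
    (heq : ∀ s : ℝ, 0 ≤ s → X s = x + w s + ℓ0*s + ∫ u in (0:ℝ)..s, (-(μ * X u) + c₀ * Z u))
    (t : ℝ) (ht : 0 ≤ t) :
    X t = (x + w t + ℓ0*t - μ * Real.exp (-(μ*t)) *
        ∫ s in (0:ℝ)..t, Real.exp (μ*s)*(x + w s + ℓ0*s))
      + c₀ * (Real.exp (-(μ*t)) * ∫ r in (0:ℝ)..t, Real.exp (μ*r) * Z r) := by
  have hXII : ∀ u : ℝ, 0 ≤ u → IntervalIntegrable X volume 0 u := by
    intro u hu
    apply ContinuousOn.intervalIntegrable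
    rw [uIcc_of_le hu]
    exact hX.mono (Icc_subset_Ici_self)
  set ζ : ℝ → ℝ := fun s => ∫ u in (0:ℝ)..s, Z u with hζ
  set I : ℝ → ℝ := fun s => ∫ u in (0:ℝ)..s, X u with hI
  set G : ℝ → ℝ := fun s => x + w s + ℓ0*s + c₀ * ζ s with hG
  have hGs : ∀ s : ℝ, 0 ≤ s → X s = G s - μ * I s := by
    intro s hs
    have h1 : (∫ u in (0:ℝ)..s, (-(μ * X u) + c₀ * Z u))
        = -(μ * I s) + c₀ * ζ s := by
      have hf : IntervalIntegrable (fun u => -(μ * X u)) volume 0 s := by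
        exact ((hXII s hs).const_mul μ).neg
      rw [intervalIntegral.integral_add hf ((hZ s hs).const_mul c₀)]
      rw [intervalIntegral.integral_neg, intervalIntegral.integral_const_mul,
        intervalIntegral.integral_const_mul]
    rw [heq s hs, h1, hG]
    ring
  have hζc : ContinuousOn ζ (Icc 0 t) := by
    have := intervalIntegral.continuousOn_primitive_interval' (hZ t ht)
      (left_mem_uIcc (a := (0:ℝ)) (b := t))
    rwa [uIcc_of_le ht] at this
  have hIc : ContinuousOn I (Icc 0 t) := by
    have := intervalIntegral.continuousOn_primitive_interval' (hXII t ht)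
      (left_mem_uIcc (a := (0:ℝ)) (b := t))
    rwa [uIcc_of_le ht] at this
  have hwc : ContinuousOn w (Icc 0 t) := hw.mono Icc_subset_Ici_self
  have hGc : ContinuousOn G (Icc 0 t) := by
    apply ContinuousOn.add
    · apply ContinuousOn.add
      · exact continuousOn_const.add hwc
      · exact (continuousOn_const.mul continuousOn_id)
    · exact continuousOn_const.mul hζc
  have hexpc : ∀ b : ℝ, Continuous (fun s : ℝ => Real.exp (b*s)) := by
    intro b
    exact Real.continuous_exp.comp (continuous_const.mul continuous_id)
  have hFc : ContinuousOn (fun s => Real.exp (μ*s) * I s) (Icc 0 t) :=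
    (hexpc μ).continuousOn.mul hIc
  have hderiv : ∀ s ∈ Ioo (0:ℝ) t, HasDerivAt (fun u => Real.exp (μ*u) * I u)
      (Real.exp (μ*s) * G s) s := by
    intro s hs
    have hIder : HasDerivAt I (X s) s := by
      apply intervalIntegral.integral_hasDerivAt_right (hXII s hs.1.le)
      · exact (hX.mono (Ioi_subset_Ici_self)).stronglyMeasurableAtFilter isOpen_Ioi s hs.1
      · exact hX.continuousAt (Ici_mem_nhds hs.1)
    have hE : HasDerivAt (fun u : ℝ => Real.exp (μ*u)) (Real.exp (μ*s) * μ) s :=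
      (Real.hasDerivAt_exp (μ*s)).comp s (by simpa using (hasDerivAt_id s).const_mul μ)
    have := hE.mul hIder
    refine this.congr_deriv ?_
    rw [hGs s hs.1.le]
    ring
  have hint : IntervalIntegrable (fun s => Real.exp (μ*s) * G s) volume 0 t := by
    apply ContinuousOn.intervalIntegrable
    rw [uIcc_of_le ht]
    exact (hexpc μ).continuousOn.mul hGc
  have hftc : (∫ s in (0:ℝ)..t, Real.exp (μ*s) * G s)
      = Real.exp (μ*t) * I t - Real.exp (μ*0) * I 0 := by
    exact intervalIntegral.integral_eq_sub_of_hasDeriv_right_of_le ht hFc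
      (fun s hs => (hderiv s hs).hasDerivWithinAt) hint
  have hI0 : I 0 = 0 := intervalIntegral.integral_same
  have hIt : I t = Real.exp (-(μ*t)) * ∫ s in (0:ℝ)..t, Real.exp (μ*s) * G s := by
    rw [hftc, hI0]
    rw [Real.exp_neg]
    field_simp [Real.exp_ne_zero]
    ring
  -- split the integral of exp * G
  have hsplit : (∫ s in (0:ℝ)..t, Real.exp (μ*s) * G s)
      = (∫ s in (0:ℝ)..t, Real.exp (μ*s) * (x + w s + ℓ0*s))
        + c₀ * ∫ s in (0:ℝ)..t, Real.exp (μ*s) * ζ s := by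
    have h1 : (fun s => Real.exp (μ*s) * G s)
        = fun s => Real.exp (μ*s) * (x + w s + ℓ0*s) + c₀ * (Real.exp (μ*s) * ζ s) := by
      funext s; rw [hG]; ring
    rw [h1, intervalIntegral.integral_add, intervalIntegral.integral_const_mul]
    · apply ContinuousOn.intervalIntegrable
      rw [uIcc_of_le ht]
      exact (hexpc μ).continuousOn.mul ((continuousOn_const.add hwc).add
        (continuousOn_const.mul continuousOn_id))
    · apply ContinuousOn.intervalIntegrable
      rw [uIcc_of_le ht]
      exact continuousOn_const.mul ((hexpc μ).continuousOn.mul hζc)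
  have hfub : (∫ s in (0:ℝ)..t, Real.exp (μ*s) * ζ s)
      = (Real.exp (μ*t)/μ) * ζ t - (1/μ) * ∫ r in (0:ℝ)..t, Real.exp (μ*r) * Z r := by
    have h0 := fub μ t (ne_of_gt hμ) ht Z (hZ t ht)
    have h1 : (∫ r in (0:ℝ)..t, ((Real.exp (μ*t) - Real.exp (μ*r))/μ) * Z r)
        = (Real.exp (μ*t)/μ) * ζ t - (1/μ) * ∫ r in (0:ℝ)..t, Real.exp (μ*r) * Z r := by
      have h2 : (fun r => ((Real.exp (μ*t) - Real.exp (μ*r))/μ) * Z r)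
          = fun r => (Real.exp (μ*t)/μ) * Z r - (1/μ) * (Real.exp (μ*r) * Z r) := by
        funext r; field_simp
      rw [h2, intervalIntegral.integral_sub ((hZ t ht).const_mul _)
        (((hZ t ht).continuousOn_mul (by rw [uIcc_of_le ht]; exact ((hexpc μ).continuousOn.mono (subset_univ _)))).const_mul _),
        intervalIntegral.integral_const_mul, intervalIntegral.integral_const_mul]
    rw [← h1, ← h0, hζ]
  rw [hGs t ht, hIt, hsplit, hfub, hG]
  rw [Real.exp_neg]
  field_simp [Real.exp_ne_zero]
  ring

lemma etaInt (μ t : ℝ) (hμ : 0 < μ) (ht : 0 ≤ t) (Z : ℝ → ℝ)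
    (hZ : IntervalIntegrable Z volume 0 t) :
    μ * ∫ s in (0:ℝ)..t, (Real.exp (-(μ*s)) * ∫ r in (0:ℝ)..s, Real.exp (μ*r) * Z r)
      = (∫ r in (0:ℝ)..t, Z r)
        - Real.exp (-(μ*t)) * ∫ r in (0:ℝ)..t, Real.exp (μ*r) * Z r := by
  have hexpc : ∀ b : ℝ, Continuous (fun s : ℝ => Real.exp (b*s)) := fun b =>
    Real.continuous_exp.comp (continuous_const.mul continuous_id)
  have hgII : IntervalIntegrable (fun r => Real.exp (μ*r) * Z r) volume 0 t :=
    hZ.continuousOn_mul ((hexpc μ).continuousOn)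
  have h0 := fub (-μ) t (by linarith) ht (fun r => Real.exp (μ*r) * Z r) hgII
  simp only [neg_mul] at h0
  have h1 : (fun r => ((Real.exp (-(μ*t)) - Real.exp (-(μ*r)))/(-μ)) * (Real.exp (μ*r) * Z r))
      = fun r => (1/μ) * Z r - (Real.exp (-(μ*t))/μ) * (Real.exp (μ*r) * Z r) := by
    funext r
    rw [Real.exp_neg, Real.exp_neg]
    have h2 : Real.exp (μ*r) ≠ 0 := Real.exp_ne_zero _
    have h3 : Real.exp (μ*t) ≠ 0 := Real.exp_ne_zero _
    have h4 : μ ≠ 0 := ne_of_gt hμ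
    field_simp
    ring
  rw [h1] at h0
  rw [intervalIntegral.integral_sub (hZ.const_mul _) (hgII.const_mul _),
    intervalIntegral.integral_const_mul, intervalIntegral.integral_const_mul] at h0
  rw [h0]
  field_simp

lemma Acont (μ x ℓ0 T : ℝ) (hT : 0 ≤ T) (w : ℝ → ℝ) (hw : ContinuousOn w (Ici 0)) :
    ContinuousOn (fun t => x + w t + ℓ0*t - μ * Real.exp (-(μ*t)) *
      ∫ s in (0:ℝ)..t, Real.exp (μ*s)*(x + w s + ℓ0*s)) (Icc 0 T) := by
  have hwc : ContinuousOn w (Icc 0 T) := hw.mono Icc_subset_Ici_self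
  have hexp : Continuous (fun t : ℝ => Real.exp (-(μ*t))) :=
    Real.continuous_exp.comp (continuous_const.mul continuous_id).neg
  have hint : IntervalIntegrable (fun s => Real.exp (μ*s)*(x + w s + ℓ0*s)) volume 0 T := by
    apply ContinuousOn.intervalIntegrable
    rw [uIcc_of_le hT]
    exact ((Real.continuous_exp.comp (continuous_const.mul continuous_id)).continuousOn).mul
      ((continuousOn_const.add hwc).add (continuousOn_const.mul continuousOn_id))
  have hprim : ContinuousOn (fun t => ∫ s in (0:ℝ)..t, Real.exp (μ*s)*(x + w s + ℓ0*s))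
      (Icc 0 T) := by
    have := intervalIntegral.continuousOn_primitive_interval' hint
      (left_mem_uIcc (a := (0:ℝ)) (b := T))
    rwa [uIcc_of_le hT] at this
  exact ((continuousOn_const.add hwc).add (continuousOn_const.mul continuousOn_id)).sub
    (((continuousOn_const.mul hexp.continuousOn)).mul hprim)

lemma etaCont (μ T : ℝ) (hT : 0 ≤ T) (Z : ℝ → ℝ) (hZ : IntervalIntegrable Z volume 0 T) :
    ContinuousOn (fun t => Real.exp (-(μ*t)) * ∫ r in (0:ℝ)..t, Real.exp (μ*r) * Z r)
      (Icc 0 T) := by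
  have hexp : Continuous (fun t : ℝ => Real.exp (-(μ*t))) :=
    Real.continuous_exp.comp (continuous_const.mul continuous_id).neg
  have hgII : IntervalIntegrable (fun r => Real.exp (μ*r) * Z r) volume 0 T :=
    hZ.continuousOn_mul ((Real.continuous_exp.comp (continuous_const.mul continuous_id)).continuousOn)
  have hprim : ContinuousOn (fun t => ∫ r in (0:ℝ)..t, Real.exp (μ*r) * Z r) (Icc 0 T) := by
    have := intervalIntegral.continuousOn_primitive_interval' hgII
      (left_mem_uIcc (a := (0:ℝ)) (b := T))
    rwa [uIcc_of_le hT] at this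
  exact hexp.continuousOn.mul hprim

lemma etaNonneg (μ s : ℝ) (hs : 0 ≤ s) (Z : ℝ → ℝ) (hZpos : ∀ r ∈ Icc 0 s, 0 ≤ Z r) :
    0 ≤ Real.exp (-(μ*s)) * ∫ r in (0:ℝ)..s, Real.exp (μ*r) * Z r := by
  apply mul_nonneg (Real.exp_pos _).le
  apply intervalIntegral.integral_nonneg hs
  intro r hr
  exact mul_nonneg (Real.exp_pos _).le (hZpos r hr)

lemma Abound (μ x ℓ0 t : ℝ) (hμ : 0 < μ) (ht : 0 ≤ t) (w : ℝ → ℝ)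
    (hw : ContinuousOn w (Ici 0)) :
    |x + w t + ℓ0*t - μ * Real.exp (-(μ*t)) *
        ∫ s in (0:ℝ)..t, Real.exp (μ*s)*(x + w s + ℓ0*s)|
      ≤ Real.exp (-(μ*t))*|x| + |w t| + μ * (∫ s in (0:ℝ)..t, |w s|) + |ℓ0| * t := by
  have hμ' : μ ≠ 0 := ne_of_gt hμ
  have hwc : ContinuousOn w (Icc 0 t) := hw.mono Icc_subset_Ici_self
  have hexpc : ∀ b : ℝ, Continuous (fun s : ℝ => Real.exp (b*s)) := fun b =>
    Real.continuous_exp.comp (continuous_const.mul continuous_id)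
  have hwII : IntervalIntegrable w volume 0 t := by
    apply ContinuousOn.intervalIntegrable; rwa [uIcc_of_le ht]
  have hawII : IntervalIntegrable (fun s => |w s|) volume 0 t := hwII.abs
  have hsplit : (∫ s in (0:ℝ)..t, Real.exp (μ*s)*(x + w s + ℓ0*s))
      = x * ((Real.exp (μ*t) - 1)/μ) + (∫ s in (0:ℝ)..t, Real.exp (μ*s) * w s)
        + ℓ0 * ∫ s in (0:ℝ)..t, Real.exp (μ*s) * s := by
    have h1 : (fun s => Real.exp (μ*s)*(x + w s + ℓ0*s))
        = fun s => x * Real.exp (μ*s) + Real.exp (μ*s) * w s + ℓ0 * (Real.exp (μ*s) * s) := by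
      funext s; ring
    have hII1 : IntervalIntegrable (fun s => x * Real.exp (μ*s)) volume 0 t :=
      ((hexpc μ).intervalIntegrable 0 t).const_mul x
    have hII2 : IntervalIntegrable (fun s => Real.exp (μ*s) * w s) volume 0 t :=
      hwII.continuousOn_mul ((hexpc μ).continuousOn)
    have hII3 : IntervalIntegrable (fun s => ℓ0 * (Real.exp (μ*s) * s)) volume 0 t :=
      (((hexpc μ).mul continuous_id).intervalIntegrable 0 t).const_mul ℓ0
    rw [h1, intervalIntegral.integral_add (hII1.add hII2) hII3,
      intervalIntegral.integral_add hII1 hII2,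
      intervalIntegral.integral_const_mul, intervalIntegral.integral_const_mul,
      intExp μ 0 t hμ']
    norm_num
  have hP2 : |∫ s in (0:ℝ)..t, Real.exp (μ*s) * w s| ≤ Real.exp (μ*t) * ∫ s in (0:ℝ)..t, |w s| := by
    refine (intervalIntegral.abs_integral_le_integral_abs ht).trans ?_
    have h2 : ∀ s ∈ Icc (0:ℝ) t, |Real.exp (μ*s) * w s| ≤ Real.exp (μ*t) * |w s| := by
      intro s hs
      rw [abs_mul, abs_of_pos (Real.exp_pos _)]
      exact mul_le_mul_of_nonneg_right (Real.exp_le_exp.2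
        (mul_le_mul_of_nonneg_left hs.2 hμ.le)) (abs_nonneg _)
    calc (∫ s in (0:ℝ)..t, |Real.exp (μ*s) * w s|)
        ≤ ∫ s in (0:ℝ)..t, Real.exp (μ*t) * |w s| := by
          apply intervalIntegral.integral_mono_on ht _ (hawII.const_mul _) h2
          apply ContinuousOn.intervalIntegrable
          rw [uIcc_of_le ht]
          exact ((hexpc μ).continuousOn.mul hwc).abs
      _ = Real.exp (μ*t) * ∫ s in (0:ℝ)..t, |w s| := intervalIntegral.integral_const_mul _ _
  have hP3a : 0 ≤ ∫ s in (0:ℝ)..t, Real.exp (μ*s) * s := by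
    apply intervalIntegral.integral_nonneg ht
    intro s hs
    exact mul_nonneg (Real.exp_pos _).le hs.1
  have hP3b : (∫ s in (0:ℝ)..t, Real.exp (μ*s) * s) ≤ t * ((Real.exp (μ*t) - 1)/μ) := by
    have h2 : ∀ s ∈ Icc (0:ℝ) t, Real.exp (μ*s) * s ≤ t * Real.exp (μ*s) := by
      intro s hs
      rw [mul_comm]
      exact mul_le_mul_of_nonneg_right hs.2 (Real.exp_pos _).le
    calc (∫ s in (0:ℝ)..t, Real.exp (μ*s) * s)
        ≤ ∫ s in (0:ℝ)..t, t * Real.exp (μ*s) := by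
          apply intervalIntegral.integral_mono_on ht
            (((hexpc μ).mul continuous_id).intervalIntegrable 0 t)
            (((hexpc μ).intervalIntegrable 0 t).const_mul t) h2
      _ = t * ((Real.exp (μ*t) - 1)/μ) := by
          rw [intervalIntegral.integral_const_mul, intExp μ 0 t hμ']
          norm_num
  rw [hsplit]
  have hee : Real.exp (-(μ*t)) * Real.exp (μ*t) = 1 := by
    rw [← Real.exp_add]; ring_nf; exact Real.exp_zero
  have hkey : x + w t + ℓ0*t - μ * Real.exp (-(μ*t)) *
      (x * ((Real.exp (μ*t) - 1)/μ) + (∫ s in (0:ℝ)..t, Real.exp (μ*s) * w s)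
        + ℓ0 * ∫ s in (0:ℝ)..t, Real.exp (μ*s) * s)
      = Real.exp (-(μ*t)) * x + w t
        - μ * Real.exp (-(μ*t)) * (∫ s in (0:ℝ)..t, Real.exp (μ*s) * w s)
        + ℓ0 * (t - μ * Real.exp (-(μ*t)) * ∫ s in (0:ℝ)..t, Real.exp (μ*s) * s) := by
    field_simp
    have hee' : Real.exp (-(t*μ)) * Real.exp (t*μ) = 1 := by rw [mul_comm t μ]; exact hee
    linear_combination (-x) * hee'
  rw [hkey]
  have hb1 : |Real.exp (-(μ*t)) * x| = Real.exp (-(μ*t)) * |x| := by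
    rw [abs_mul, abs_of_pos (Real.exp_pos _)]
  have hb2 : |μ * Real.exp (-(μ*t)) * (∫ s in (0:ℝ)..t, Real.exp (μ*s) * w s)|
      ≤ μ * ∫ s in (0:ℝ)..t, |w s| := by
    rw [abs_mul, abs_mul, abs_of_pos hμ, abs_of_pos (Real.exp_pos _)]
    calc μ * Real.exp (-(μ*t)) * |∫ s in (0:ℝ)..t, Real.exp (μ*s) * w s|
        ≤ μ * Real.exp (-(μ*t)) * (Real.exp (μ*t) * ∫ s in (0:ℝ)..t, |w s|) := by
          apply mul_le_mul_of_nonneg_left hP2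
          positivity
      _ = μ * ∫ s in (0:ℝ)..t, |w s| := by
          rw [mul_assoc μ, ← mul_assoc (Real.exp (-(μ*t))), hee]; ring
  have hb3 : |ℓ0 * (t - μ * Real.exp (-(μ*t)) * ∫ s in (0:ℝ)..t, Real.exp (μ*s) * s)|
      ≤ |ℓ0| * t := by
    rw [abs_mul]
    apply mul_le_mul_of_nonneg_left _ (abs_nonneg _)
    rw [abs_le]
    constructor
    · have h5 : μ * Real.exp (-(μ*t)) * (∫ s in (0:ℝ)..t, Real.exp (μ*s) * s)
          ≤ μ * Real.exp (-(μ*t)) * (t * ((Real.exp (μ*t) - 1)/μ)) := by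
        apply mul_le_mul_of_nonneg_left hP3b; positivity
      have h6 : μ * Real.exp (-(μ*t)) * (t * ((Real.exp (μ*t) - 1)/μ))
          = t * (1 - Real.exp (-(μ*t))) := by
        field_simp
        linear_combination t * hee
      have h7 : t * (1 - Real.exp (-(μ*t))) ≤ t := by
        have : 0 ≤ Real.exp (-(μ*t)) := (Real.exp_pos _).le
        nlinarith
      nlinarith [h5, h6.le, h6.ge, h7]
    · have h8 : 0 ≤ μ * Real.exp (-(μ*t)) * (∫ s in (0:ℝ)..t, Real.exp (μ*s) * s) := by
        positivity
      linarith
  calc |Real.exp (-(μ*t)) * x + w t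
        - μ * Real.exp (-(μ*t)) * (∫ s in (0:ℝ)..t, Real.exp (μ*s) * w s)
        + ℓ0 * (t - μ * Real.exp (-(μ*t)) * ∫ s in (0:ℝ)..t, Real.exp (μ*s) * s)|
      ≤ |Real.exp (-(μ*t)) * x| + |w t|
        + |μ * Real.exp (-(μ*t)) * (∫ s in (0:ℝ)..t, Real.exp (μ*s) * w s)|
        + |ℓ0 * (t - μ * Real.exp (-(μ*t)) * ∫ s in (0:ℝ)..t, Real.exp (μ*s) * s)| := by
        refine (abs_add_le _ _).trans ?_
        apply add_le_add_left
        refine (abs_sub _ _).trans ?_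
        apply add_le_add_left
        exact abs_add_le _ _
    _ ≤ Real.exp (-(μ*t))*|x| + |w t| + μ * (∫ s in (0:ℝ)..t, |w s|) + |ℓ0| * t := by
        rw [hb1]
        linarith [hb2, hb3]

end helpers


lemma Bint (μ0 x0 ℓ0 t : ℝ) (hμ0 : 0 < μ0) (ht : 0 ≤ t) (hx0 : 0 ≤ x0) (hℓ0 : 0 ≤ ℓ0)
    (v : ℝ → ℝ) (hv : ContinuousOn v (Ici 0)) :
    (∫ s in (0:ℝ)..t, (Real.exp (-(μ0 * s)) * x0 + v s + μ0 * (∫ u in (0:ℝ)..s, v u) + ℓ0 * s))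
      ≤ μ0⁻¹ * x0 + (∫ s in (0:ℝ)..t, v s) + μ0 * (∫ s in (0:ℝ)..t, ∫ u in (0:ℝ)..s, v u)
        + ℓ0 * t^2 := by
  have hvc : ContinuousOn v (Icc 0 t) := hv.mono Icc_subset_Ici_self
  have hvII : IntervalIntegrable v volume 0 t := by
    apply ContinuousOn.intervalIntegrable; rwa [uIcc_of_le ht]
  have hexp : Continuous (fun s : ℝ => Real.exp (-(μ0*s))) :=
    Real.continuous_exp.comp (continuous_const.mul continuous_id).neg
  have hprimc : ContinuousOn (fun s => ∫ u in (0:ℝ)..s, v u) (Icc 0 t) := by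
    have := intervalIntegral.continuousOn_primitive_interval' hvII
      (left_mem_uIcc (a := (0:ℝ)) (b := t))
    rwa [uIcc_of_le ht] at this
  have hprimII : IntervalIntegrable (fun s => ∫ u in (0:ℝ)..s, v u) volume 0 t := by
    apply ContinuousOn.intervalIntegrable; rw [uIcc_of_le ht]; exact hprimc
  have h1II : IntervalIntegrable (fun s => Real.exp (-(μ0*s)) * x0) volume 0 t :=
    (hexp.intervalIntegrable 0 t).mul_const x0
  have h4II : IntervalIntegrable (fun s : ℝ => ℓ0 * s) volume 0 t :=
    (continuous_id.intervalIntegrable 0 t).const_mul ℓ0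
  have hsplit : (∫ s in (0:ℝ)..t,
        (Real.exp (-(μ0 * s)) * x0 + v s + μ0 * (∫ u in (0:ℝ)..s, v u) + ℓ0 * s))
      = (∫ s in (0:ℝ)..t, Real.exp (-(μ0*s)) * x0) + (∫ s in (0:ℝ)..t, v s)
        + μ0 * (∫ s in (0:ℝ)..t, ∫ u in (0:ℝ)..s, v u) + ℓ0 * (∫ s in (0:ℝ)..t, s) := by
    rw [intervalIntegral.integral_add ((h1II.add hvII).add (hprimII.const_mul μ0)) h4II,
      intervalIntegral.integral_add (h1II.add hvII) (hprimII.const_mul μ0),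
      intervalIntegral.integral_add h1II hvII,
      intervalIntegral.integral_const_mul, intervalIntegral.integral_const_mul]
  rw [hsplit]
  have e1 : (∫ s in (0:ℝ)..t, Real.exp (-(μ0*s)) * x0) ≤ μ0⁻¹ * x0 := by
    have hfe : (fun s => Real.exp (-(μ0*s)) * x0) = fun s => Real.exp ((-μ0)*s) * x0 := by
      funext s; rw [neg_mul]
    rw [hfe, intervalIntegral.integral_mul_const, intExp (-μ0) 0 t (by linarith)]
    have h2 : Real.exp ((-μ0)*t) ≥ 0 := (Real.exp_pos _).le
    have h3 : Real.exp ((-μ0)*0) = 1 := by norm_num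
    rw [h3]
    have heq : (Real.exp ((-μ0)*t) - 1)/(-μ0) = (1 - Real.exp ((-μ0)*t)) * μ0⁻¹ := by
      rw [div_neg, ← neg_div, neg_sub, div_eq_mul_inv]
    rw [heq]
    have h5 : (1 - Real.exp ((-μ0)*t)) * μ0⁻¹ ≤ μ0⁻¹ := by
      have : 0 ≤ μ0⁻¹ := (inv_pos.2 hμ0).le
      nlinarith
    exact mul_le_mul_of_nonneg_right h5 hx0
  have e4 : ℓ0 * (∫ s in (0:ℝ)..t, s) ≤ ℓ0 * t^2 := by
    rw [integral_id]
    apply mul_le_mul_of_nonneg_left _ hℓ0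
    nlinarith
  linarith

theorem stmt_18 {k : ℕ} (hk : 1 ≤ k) (ℓ μ θ : Fin k → ℝ)
    (hμ : ∀ i, 0 < μ i) (hθ : ∀ i, 0 ≤ θ i) :
    ∃ c > (0:ℝ),
      ∀ (x : Fin k → ℝ) (w : ℝ → Fin k → ℝ), ContinuousOn w (Ici 0) → w 0 = 0 →
      ∀ (X Ψ : ℝ → Fin k → ℝ), ContinuousOn X (Ici 0) →
        (∀ i, ∀ t : ℝ, IntervalIntegrable (fun s => Ψ s i) volume 0 t) →
        (∀ t ≥ (0:ℝ), ∀ i, Ψ t i ≤ X t i) →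
        (∀ t ≥ (0:ℝ), ∑ i, Ψ t i = min 0 (∑ i, X t i)) →
        (∀ t ≥ (0:ℝ), ∀ i, X t i = x i + w t i +
          ∫ s in (0:ℝ)..t, (-θ i * X s i - (μ i - θ i) * Ψ s i + ℓ i)) →
      ∀ t ≥ (0:ℝ),
        l1 (X t) ≤ c * (1 + t ^ 2 + l1 x + l1 (w t) +
          (∫ s in (0:ℝ)..t, l1 (w s)) +
          ∫ s in (0:ℝ)..t, ∫ r in (0:ℝ)..s, l1 (w r)) := by
  classical
  have hΛ0 : (0:ℝ) ≤ ∑ i, |ℓ i| := Finset.sum_nonneg fun i _ => abs_nonneg _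
  have hM0 : (0:ℝ) ≤ ∑ i, μ i := Finset.sum_nonneg fun i _ => (hμ i).le
  have hD0 : (0:ℝ) ≤ ∑ i, |μ i - θ i| := Finset.sum_nonneg fun i _ => abs_nonneg _
  have hm0 : (0:ℝ) ≤ ∑ i, (μ i)⁻¹ := Finset.sum_nonneg fun i _ => (inv_pos.2 (hμ i)).le
  set Λ : ℝ := ∑ i, |ℓ i| with hΛdef
  set M : ℝ := ∑ i, μ i with hMdef
  set D : ℝ := ∑ i, |μ i - θ i| with hDdef
  set m' : ℝ := ∑ i, (μ i)⁻¹ with hm'def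
  refine ⟨1 + Λ + D*Λ + D*m' + M + D + D*M, by nlinarith, ?_⟩
  intro x w hw hw0 X Ψ hXc hΨint hΨle hΨsum hXeq t ht
  -- componentwise continuity
  have hXi : ∀ i, ContinuousOn (fun s => X s i) (Ici 0) :=
    fun i => (continuous_apply i).comp_continuousOn hXc
  have hwi : ∀ i, ContinuousOn (fun s => w s i) (Ici 0) :=
    fun i => (continuous_apply i).comp_continuousOn hw
  have hXiII : ∀ i, ∀ u : ℝ, 0 ≤ u → IntervalIntegrable (fun s => X s i) volume 0 u := by
    intro i u hu
    apply ContinuousOn.intervalIntegrable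
    rw [uIcc_of_le hu]
    exact (hXi i).mono Icc_subset_Ici_self
  have hwiII : ∀ i, ∀ u : ℝ, 0 ≤ u → IntervalIntegrable (fun s => |w s i|) volume 0 u := by
    intro i u hu
    apply ContinuousOn.intervalIntegrable
    rw [uIcc_of_le hu]
    exact ((hwi i).mono Icc_subset_Ici_self).abs
  have hZII : ∀ i, ∀ u : ℝ, 0 ≤ u →
      IntervalIntegrable (fun s => X s i - Ψ s i) volume 0 u :=
    fun i u hu => (hXiII i u hu).sub (hΨint i u)
  -- the integral equation in normal form
  have heqi : ∀ i, ∀ s : ℝ, 0 ≤ s → X s i = x i + w s i + ℓ i * s +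
      ∫ u in (0:ℝ)..s, (-(μ i * X u i) + (μ i - θ i) * (X u i - Ψ u i)) := by
    intro i s hs
    have h1 := hXeq s hs i
    have hfe : (fun u => -θ i * X u i - (μ i - θ i) * Ψ u i + ℓ i)
        = fun u => (-(μ i * X u i) + (μ i - θ i) * (X u i - Ψ u i)) + ℓ i :=
      funext fun u => by ring
    rw [hfe] at h1
    have hfII : IntervalIntegrable (fun u => -(μ i * X u i) + (μ i - θ i) * (X u i - Ψ u i))
        volume 0 s := by
      apply IntervalIntegrable.add
      · exact ((hXiII i s hs).const_mul (μ i)).neg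
      · exact (hZII i s hs).const_mul _
    rw [intervalIntegral.integral_add hfII intervalIntegrable_const,
      intervalIntegral.integral_const, smul_eq_mul] at h1
    rw [h1]; ring
  set A : Fin k → ℝ → ℝ := fun i s => x i + w s i + ℓ i * s - μ i * Real.exp (-(μ i * s)) *
      ∫ u in (0:ℝ)..s, Real.exp (μ i * u) * (x i + w u i + ℓ i * u) with hAdef
  set η : Fin k → ℝ → ℝ := fun i s => Real.exp (-(μ i * s)) *
      ∫ r in (0:ℝ)..s, Real.exp (μ i * r) * (X r i - Ψ r i) with hηdef
  have hvoc : ∀ i, ∀ s : ℝ, 0 ≤ s → X s i = A i s + (μ i - θ i) * η i s := by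
    intro i s hs
    have h := voc (μ i) (μ i - θ i) (x i) (ℓ i) (hμ i) (fun u => w u i) (fun u => X u i)
      (fun u => X u i - Ψ u i) (hXi i) (hwi i) (hZII i) (heqi i) s hs
    rw [hAdef, hηdef]
    exact h
  have hηpos : ∀ i, ∀ s : ℝ, 0 ≤ s → 0 ≤ η i s := by
    intro i s hs
    rw [hηdef]
    exact etaNonneg (μ i) s hs _ (fun r hr => sub_nonneg.2 (hΨle r hr.1 i))
  have hAcont : ∀ i, ContinuousOn (A i) (Icc 0 t) := by
    intro i
    rw [hAdef]
    exact Acont (μ i) (x i) (ℓ i) t ht (fun u => w u i) (hwi i)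
  have hηcont : ∀ i, ContinuousOn (η i) (Icc 0 t) := by
    intro i
    rw [hηdef]
    exact etaCont (μ i) t ht _ (hZII i t ht)
  have hkey : ∀ s ∈ Icc (0:ℝ) t, (∑ i, (X s i - Ψ s i))
      ≤ (∑ i, |A i s|) + ∑ i, μ i * η i s := by
    intro s hs
    have hs0 : (0:ℝ) ≤ s := hs.1
    have hsum : ∑ i, (X s i - Ψ s i) = max (∑ i, X s i) 0 := by
      rw [Finset.sum_sub_distrib, hΨsum s hs0]
      rcases le_total 0 (∑ i, X s i) with h | h
      · rw [min_eq_left h, max_eq_left h]; ring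
      · rw [min_eq_right h, max_eq_right h]; ring
    rw [hsum]
    apply max_le
    · have h1 : ∑ i, X s i = ∑ i, (A i s + (μ i - θ i) * η i s) :=
        Finset.sum_congr rfl fun i _ => hvoc i s hs0
      rw [h1, Finset.sum_add_distrib]
      apply add_le_add
      · exact Finset.sum_le_sum fun i _ => le_abs_self _
      · refine Finset.sum_le_sum fun i _ => ?_
        exact mul_le_mul_of_nonneg_right (by linarith [hθ i]) (hηpos i s hs0)
    · apply add_nonneg
      · exact Finset.sum_nonneg fun i _ => abs_nonneg _
      · exact Finset.sum_nonneg fun i _ => mul_nonneg (hμ i).le (hηpos i s hs0)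
  have hZsumII : IntervalIntegrable (fun s => ∑ i, (X s i - Ψ s i)) volume 0 t := by
    have h := IntervalIntegrable.sum (μ := volume) (a := (0:ℝ)) (b := t) Finset.univ
      (fun i _ => hZII i t ht)
    rw [Finset.sum_fn] at h
    exact h
  have hAsumII : IntervalIntegrable (fun s => ∑ i, |A i s|) volume 0 t := by
    apply ContinuousOn.intervalIntegrable
    rw [uIcc_of_le ht]
    exact continuousOn_finset_sum _ fun i _ => (hAcont i).abs
  have hηsumII : IntervalIntegrable (fun s => ∑ i, μ i * η i s) volume 0 t := by
    apply ContinuousOn.intervalIntegrable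
    rw [uIcc_of_le ht]
    exact continuousOn_finset_sum _ fun i _ => continuousOn_const.mul (hηcont i)
  have hηII : ∀ i, IntervalIntegrable (η i) volume 0 t := fun i => by
    apply ContinuousOn.intervalIntegrable
    rw [uIcc_of_le ht]
    exact hηcont i
  have hmono := intervalIntegral.integral_mono_on ht hZsumII (hAsumII.add hηsumII) hkey
  have hL : (∫ s in (0:ℝ)..t, ∑ i, (X s i - Ψ s i))
      = ∑ i, ∫ s in (0:ℝ)..t, (X s i - Ψ s i) :=
    intervalIntegral.integral_finset_sum (fun i _ => hZII i t ht)
  have hetaInt : ∀ i, μ i * (∫ s in (0:ℝ)..t, η i s)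
      = (∫ r in (0:ℝ)..t, (X r i - Ψ r i)) - η i t := by
    intro i
    rw [hηdef]
    exact etaInt (μ i) t (hμ i) ht _ (hZII i t ht)
  have hR : (∫ s in (0:ℝ)..t, ((∑ i, |A i s|) + ∑ i, μ i * η i s))
      = (∫ s in (0:ℝ)..t, ∑ i, |A i s|)
        + ((∑ i, ∫ r in (0:ℝ)..t, (X r i - Ψ r i)) - ∑ i, η i t) := by
    rw [intervalIntegral.integral_add hAsumII hηsumII]
    congr 1
    rw [intervalIntegral.integral_finset_sum (fun i _ => (hηII i).const_mul (μ i))]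
    rw [← Finset.sum_sub_distrib]
    apply Finset.sum_congr rfl
    intro i _
    rw [intervalIntegral.integral_const_mul, hetaInt i]
  have hetasum : (∑ i, η i t) ≤ ∫ s in (0:ℝ)..t, ∑ i, |A i s| := by
    rw [hL] at hmono
    rw [hR] at hmono
    linarith
  -- swap lemmas between componentwise sums and l1 integrals
  have hl1w : (fun s => l1 (w s)) = fun s => ∑ i, |w s i| := by
    funext s; simp [l1]
  have hprimiII : ∀ i, IntervalIntegrable (fun s => ∫ u in (0:ℝ)..s, |w u i|) volume 0 t := by
    intro i
    apply ContinuousOn.intervalIntegrable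
    rw [uIcc_of_le ht]
    have := intervalIntegral.continuousOn_primitive_interval' (hwiII i t ht)
      (left_mem_uIcc (a := (0:ℝ)) (b := t))
    rwa [uIcc_of_le ht] at this
  have hIwswap : (∑ i, ∫ u in (0:ℝ)..t, |w u i|) = ∫ s in (0:ℝ)..t, l1 (w s) := by
    rw [hl1w, ← intervalIntegral.integral_finset_sum (fun i _ => hwiII i t ht)]
  have hIIwswap : (∑ i, ∫ s in (0:ℝ)..t, ∫ u in (0:ℝ)..s, |w u i|)
      = ∫ s in (0:ℝ)..t, ∫ r in (0:ℝ)..s, l1 (w r) := by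
    rw [hl1w, ← intervalIntegral.integral_finset_sum (fun i _ => hprimiII i)]
    apply intervalIntegral.integral_congr
    intro s hs
    have hs0 : 0 ≤ s := by
      rw [uIcc_of_le ht] at hs; exact hs.1
    show (∑ i, ∫ u in (0:ℝ)..s, |w u i|) = ∫ u in (0:ℝ)..s, ∑ i, |w u i|
    rw [intervalIntegral.integral_finset_sum (fun i _ => hwiII i s hs0)]
  -- bound on |A i s|
  have hAb : ∀ i, ∀ s : ℝ, 0 ≤ s → |A i s| ≤ Real.exp (-(μ i * s)) * |x i| + |w s i|
      + μ i * (∫ u in (0:ℝ)..s, |w u i|) + |ℓ i| * s := by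
    intro i s hs
    rw [hAdef]
    exact Abound (μ i) (x i) (ℓ i) s (hμ i) hs (fun u => w u i) (hwi i)
  -- first main bound
  have hXbound : l1 (X t) ≤ (∑ i, |A i t|) + D * ∑ i, η i t := by
    have h1 : ∀ i, |X t i| ≤ |A i t| + D * η i t := by
      intro i
      rw [hvoc i t ht]
      refine (abs_add_le _ _).trans ?_
      apply add_le_add_right
      rw [abs_mul, abs_of_nonneg (hηpos i t ht)]
      refine mul_le_mul_of_nonneg_right ?_ (hηpos i t ht)
      rw [hDdef]
      exact Finset.single_le_sum (f := fun j => |μ j - θ j|) (fun j _ => abs_nonneg _)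
        (Finset.mem_univ i)
    calc l1 (X t) = ∑ i, |X t i| := by simp [l1]
      _ ≤ ∑ i, (|A i t| + D * η i t) := Finset.sum_le_sum fun i _ => h1 i
      _ = (∑ i, |A i t|) + D * ∑ i, η i t := by
          rw [Finset.sum_add_distrib, Finset.mul_sum]
  -- bound on the sum of |A i t|
  have hIw0 : ∀ i, 0 ≤ ∫ u in (0:ℝ)..t, |w u i| :=
    fun i => intervalIntegral.integral_nonneg ht fun u _ => abs_nonneg _
  have hht : (∑ i, |A i t|) ≤ (∑ i, |x i|) + (∑ i, |w t i|)
      + M * (∑ i, ∫ u in (0:ℝ)..t, |w u i|) + Λ * t := by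
    have h1 : ∀ i, |A i t| ≤ |x i| + |w t i| + M * (∫ u in (0:ℝ)..t, |w u i|) + |ℓ i| * t := by
      intro i
      refine (hAb i t ht).trans ?_
      have h2 : Real.exp (-(μ i * t)) ≤ 1 :=
        Real.exp_le_one_iff.2 (neg_nonpos.2 (mul_nonneg (hμ i).le ht))
      have e1 : Real.exp (-(μ i * t)) * |x i| ≤ |x i| := by
        nlinarith [abs_nonneg (x i), (Real.exp_pos (-(μ i * t))).le]
      have e3 : μ i ≤ M := by
        rw [hMdef]
        exact Finset.single_le_sum (f := fun j => μ j) (fun j _ => (hμ j).le)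
          (Finset.mem_univ i)
      have e4 : μ i * (∫ u in (0:ℝ)..t, |w u i|) ≤ M * (∫ u in (0:ℝ)..t, |w u i|) :=
        mul_le_mul_of_nonneg_right e3 (hIw0 i)
      linarith
    calc (∑ i, |A i t|)
        ≤ ∑ i, (|x i| + |w t i| + M * (∫ u in (0:ℝ)..t, |w u i|) + |ℓ i| * t) :=
          Finset.sum_le_sum fun i _ => h1 i
      _ = (∑ i, |x i|) + (∑ i, |w t i|)
          + M * (∑ i, ∫ u in (0:ℝ)..t, |w u i|) + Λ * t := by
          rw [Finset.sum_add_distrib, Finset.sum_add_distrib, Finset.sum_add_distrib,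
            ← Finset.mul_sum, ← Finset.sum_mul, hΛdef]
  -- bound on the integral of the sum of |A i s|
  have hII0 : ∀ i, 0 ≤ ∫ s in (0:ℝ)..t, ∫ u in (0:ℝ)..s, |w u i| := by
    intro i
    apply intervalIntegral.integral_nonneg ht
    intro s hs
    exact intervalIntegral.integral_nonneg hs.1 fun u _ => abs_nonneg _
  have hBiII : ∀ i, IntervalIntegrable (fun s => Real.exp (-(μ i * s)) * |x i| + |w s i|
      + μ i * (∫ u in (0:ℝ)..s, |w u i|) + |ℓ i| * s) volume 0 t := by
    intro i
    have hexp : Continuous (fun s : ℝ => Real.exp (-(μ i * s))) :=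
      Real.continuous_exp.comp (continuous_const.mul continuous_id).neg
    exact (((hexp.intervalIntegrable 0 t).mul_const _).add (hwiII i t ht)).add
      ((hprimiII i).const_mul _) |>.add ((continuous_id.intervalIntegrable 0 t).const_mul _)
  have hinth : (∫ s in (0:ℝ)..t, ∑ i, |A i s|)
      ≤ m' * (∑ i, |x i|) + (∑ i, ∫ s in (0:ℝ)..t, |w s i|)
        + M * (∑ i, ∫ s in (0:ℝ)..t, ∫ u in (0:ℝ)..s, |w u i|) + Λ * t^2 := by
    have hBsumII : IntervalIntegrable (fun s => ∑ i, (Real.exp (-(μ i * s)) * |x i| + |w s i|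
        + μ i * (∫ u in (0:ℝ)..s, |w u i|) + |ℓ i| * s)) volume 0 t := by
      have h := IntervalIntegrable.sum (μ := volume) (a := (0:ℝ)) (b := t) Finset.univ
        (fun i _ => hBiII i)
      rw [Finset.sum_fn] at h
      exact h
    have step1 : (∫ s in (0:ℝ)..t, ∑ i, |A i s|)
        ≤ ∫ s in (0:ℝ)..t, ∑ i, (Real.exp (-(μ i * s)) * |x i| + |w s i|
          + μ i * (∫ u in (0:ℝ)..s, |w u i|) + |ℓ i| * s) :=
      intervalIntegral.integral_mono_on ht hAsumII hBsumII
        (fun s hs => Finset.sum_le_sum fun i _ => hAb i s hs.1)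
    have step2 : (∫ s in (0:ℝ)..t, ∑ i, (Real.exp (-(μ i * s)) * |x i| + |w s i|
          + μ i * (∫ u in (0:ℝ)..s, |w u i|) + |ℓ i| * s))
        = ∑ i, ∫ s in (0:ℝ)..t, (Real.exp (-(μ i * s)) * |x i| + |w s i|
          + μ i * (∫ u in (0:ℝ)..s, |w u i|) + |ℓ i| * s) :=
      intervalIntegral.integral_finset_sum (fun i _ => hBiII i)
    have step3 : ∀ i, (∫ s in (0:ℝ)..t, (Real.exp (-(μ i * s)) * |x i| + |w s i|
          + μ i * (∫ u in (0:ℝ)..s, |w u i|) + |ℓ i| * s))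
        ≤ (μ i)⁻¹ * |x i| + (∫ s in (0:ℝ)..t, |w s i|)
          + μ i * (∫ s in (0:ℝ)..t, ∫ u in (0:ℝ)..s, |w u i|) + |ℓ i| * t^2 :=
      fun i => Bint (μ i) (|x i|) (|ℓ i|) t (hμ i) ht (abs_nonneg _) (abs_nonneg _)
        (fun u => |w u i|) ((hwi i).abs)
    have step4 : (∑ i, ((μ i)⁻¹ * |x i| + (∫ s in (0:ℝ)..t, |w s i|)
          + μ i * (∫ s in (0:ℝ)..t, ∫ u in (0:ℝ)..s, |w u i|) + |ℓ i| * t^2))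
        ≤ m' * (∑ i, |x i|) + (∑ i, ∫ s in (0:ℝ)..t, |w s i|)
          + M * (∑ i, ∫ s in (0:ℝ)..t, ∫ u in (0:ℝ)..s, |w u i|) + Λ * t^2 := by
      have e1 : ∀ i, (μ i)⁻¹ * |x i| ≤ m' * |x i| := by
        intro i
        apply mul_le_mul_of_nonneg_right _ (abs_nonneg _)
        rw [hm'def]
        exact Finset.single_le_sum (f := fun j => (μ j)⁻¹)
          (fun j _ => (inv_pos.2 (hμ j)).le) (Finset.mem_univ i)
      have e2 : ∀ i, μ i * (∫ s in (0:ℝ)..t, ∫ u in (0:ℝ)..s, |w u i|)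
          ≤ M * (∫ s in (0:ℝ)..t, ∫ u in (0:ℝ)..s, |w u i|) := by
        intro i
        apply mul_le_mul_of_nonneg_right _ (hII0 i)
        rw [hMdef]
        exact Finset.single_le_sum (f := fun j => μ j) (fun j _ => (hμ j).le)
          (Finset.mem_univ i)
      calc (∑ i, ((μ i)⁻¹ * |x i| + (∫ s in (0:ℝ)..t, |w s i|)
            + μ i * (∫ s in (0:ℝ)..t, ∫ u in (0:ℝ)..s, |w u i|) + |ℓ i| * t^2))
          ≤ ∑ i, (m' * |x i| + (∫ s in (0:ℝ)..t, |w s i|)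
            + M * (∫ s in (0:ℝ)..t, ∫ u in (0:ℝ)..s, |w u i|) + |ℓ i| * t^2) := by
            refine Finset.sum_le_sum fun i _ => ?_
            have := e1 i
            have := e2 i
            linarith
        _ = m' * (∑ i, |x i|) + (∑ i, ∫ s in (0:ℝ)..t, |w s i|)
            + M * (∑ i, ∫ s in (0:ℝ)..t, ∫ u in (0:ℝ)..s, |w u i|) + Λ * t^2 := by
            rw [Finset.sum_add_distrib, Finset.sum_add_distrib, Finset.sum_add_distrib,
              ← Finset.mul_sum, ← Finset.mul_sum, ← Finset.sum_mul, hΛdef]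
    calc (∫ s in (0:ℝ)..t, ∑ i, |A i s|)
        ≤ ∑ i, ∫ s in (0:ℝ)..t, (Real.exp (-(μ i * s)) * |x i| + |w s i|
          + μ i * (∫ u in (0:ℝ)..s, |w u i|) + |ℓ i| * s) := by rw [← step2]; exact step1
      _ ≤ ∑ i, ((μ i)⁻¹ * |x i| + (∫ s in (0:ℝ)..t, |w s i|)
          + μ i * (∫ s in (0:ℝ)..t, ∫ u in (0:ℝ)..s, |w u i|) + |ℓ i| * t^2) :=
          Finset.sum_le_sum fun i _ => step3 i
      _ ≤ m' * (∑ i, |x i|) + (∑ i, ∫ s in (0:ℝ)..t, |w s i|)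
          + M * (∑ i, ∫ s in (0:ℝ)..t, ∫ u in (0:ℝ)..s, |w u i|) + Λ * t^2 := step4
  -- final assembly
  have hl1x : l1 x = ∑ i, |x i| := by simp [l1]
  have hl1wt : l1 (w t) = ∑ i, |w t i| := by simp [l1]
  have hx0 : 0 ≤ l1 x := by rw [hl1x]; exact Finset.sum_nonneg fun i _ => abs_nonneg _
  have hwt0 : 0 ≤ l1 (w t) := by rw [hl1wt]; exact Finset.sum_nonneg fun i _ => abs_nonneg _
  have hIw0' : 0 ≤ ∫ s in (0:ℝ)..t, l1 (w s) := by
    rw [← hIwswap]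
    exact Finset.sum_nonneg fun i _ => hIw0 i
  have hIIw0' : 0 ≤ ∫ s in (0:ℝ)..t, ∫ r in (0:ℝ)..s, l1 (w r) := by
    rw [← hIIwswap]
    exact Finset.sum_nonneg fun i _ => hII0 i
  have hDQ : D * (∑ i, η i t) ≤ D * ∫ s in (0:ℝ)..t, ∑ i, |A i s| :=
    mul_le_mul_of_nonneg_left hetasum hD0
  have hfinal : l1 (X t) ≤ l1 x + l1 (w t) + M * (∫ s in (0:ℝ)..t, l1 (w s)) + Λ * t
      + D * (m' * l1 x + (∫ s in (0:ℝ)..t, l1 (w s))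
        + M * (∫ s in (0:ℝ)..t, ∫ r in (0:ℝ)..s, l1 (w r)) + Λ * t^2) := by
    have h1 : (∫ s in (0:ℝ)..t, ∑ i, |A i s|)
        ≤ m' * l1 x + (∫ s in (0:ℝ)..t, l1 (w s))
          + M * (∫ s in (0:ℝ)..t, ∫ r in (0:ℝ)..s, l1 (w r)) + Λ * t^2 := by
      rw [hl1x, ← hIwswap, ← hIIwswap]
      exact hinth
    have h2 : (∑ i, |A i t|) ≤ l1 x + l1 (w t) + M * (∫ s in (0:ℝ)..t, l1 (w s)) + Λ * t := by
      rw [hl1x, hl1wt, ← hIwswap]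
      exact hht
    have h3 : D * (m' * l1 x + (∫ s in (0:ℝ)..t, l1 (w s))
        + M * (∫ s in (0:ℝ)..t, ∫ r in (0:ℝ)..s, l1 (w r)) + Λ * t^2)
        ≥ D * ∫ s in (0:ℝ)..t, ∑ i, |A i s| := mul_le_mul_of_nonneg_left h1 hD0
    linarith [hXbound, hDQ]
  have ht2 : t ≤ 1 + t^2 := by nlinarith [sq_nonneg (t-1)]
  have hΛt : Λ * t ≤ Λ * 1 + Λ * t^2 := by
    have := mul_le_mul_of_nonneg_left ht2 hΛ0
    linarith [this]
  have hDΛ : 0 ≤ D*Λ := mul_nonneg hD0 hΛ0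
  have hDm : 0 ≤ D*m' := mul_nonneg hD0 hm0
  have hDM : 0 ≤ D*M := mul_nonneg hD0 hM0
  have k1 : Λ * 1 ≤ (1 + Λ + D*Λ + D*m' + M + D + D*M) * 1 := by linarith
  have k2 : (Λ + D*Λ) * t^2 ≤ (1 + Λ + D*Λ + D*m' + M + D + D*M) * t^2 := by
    apply mul_le_mul_of_nonneg_right _ (sq_nonneg t)
    linarith
  have k3 : (1 + D*m') * l1 x ≤ (1 + Λ + D*Λ + D*m' + M + D + D*M) * l1 x := by
    apply mul_le_mul_of_nonneg_right _ hx0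
    linarith
  have k4 : (1:ℝ) * l1 (w t) ≤ (1 + Λ + D*Λ + D*m' + M + D + D*M) * l1 (w t) := by
    apply mul_le_mul_of_nonneg_right _ hwt0
    linarith
  have k5 : (M + D) * (∫ s in (0:ℝ)..t, l1 (w s))
      ≤ (1 + Λ + D*Λ + D*m' + M + D + D*M) * ∫ s in (0:ℝ)..t, l1 (w s) := by
    apply mul_le_mul_of_nonneg_right _ hIw0'
    linarith
  have k6 : (D*M) * (∫ s in (0:ℝ)..t, ∫ r in (0:ℝ)..s, l1 (w r))
      ≤ (1 + Λ + D*Λ + D*m' + M + D + D*M) * ∫ s in (0:ℝ)..t, ∫ r in (0:ℝ)..s, l1 (w r) := by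
    apply mul_le_mul_of_nonneg_right _ hIIw0'
    linarith
  linarith [hfinal, hΛt, k1, k2, k3, k4, k5, k6]
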